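/- Let λ > 0 and on ℝ² define the weight w_λ(x₁,x₂) := (log(max{e, e/|x₂|}))^λ and the measure dμ := w_λ dm₂. Then there is a constant C, depending only on λ, such that for every z ∈ ℝ² and every r > 0, μ(B(z,r)) ≤ C·r²·inf_{x ∈ B(z,r)} w_λ(x); in other words, w_λ is a Muckenhoupt A₁-weight on ℝ². -/

import Mathlib

open MeasureTheory Metric Set

namespace WlamAux

/-- The 1D profile of the weight. -/
noncomputable def v (lam : ℝ) (t : ℝ) : ℝ :=
  Real.log (max (Real.exp 1) (Real.exp 1 / |t|)) ^ lam

/-- auxiliary function -/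
noncomputable def g (t : ℝ) : ℝ := max 1 (1 - Real.log |t|)

lemma one_le_g (t : ℝ) : 1 ≤ g t := le_max_left _ _

lemma g_nonneg (t : ℝ) : 0 ≤ g t := zero_le_one.trans (one_le_g t)

lemma v_eq (lam t : ℝ) : v lam t = g t ^ lam := by
  unfold v g
  rcases eq_or_ne t 0 with h | h
  · simp [h, Real.log_exp, max_eq_left (Real.exp_pos 1).le]
  · have ht : 0 < |t| := abs_pos.mpr h
    have hlog : Real.log (Real.exp 1 / |t|) = 1 - Real.log |t| := by
      rw [Real.log_div (Real.exp_ne_zero 1) ht.ne', Real.log_exp]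
    rcases le_total (Real.exp 1) (Real.exp 1 / |t|) with hle | hle
    · have h1 : (1:ℝ) ≤ 1 - Real.log |t| := by
        have := Real.log_le_log (Real.exp_pos 1) hle
        rwa [Real.log_exp, hlog] at this
      rw [max_eq_right hle, hlog, max_eq_right h1]
    · have h1 : 1 - Real.log |t| ≤ (1:ℝ) := by
        have := Real.log_le_log (by positivity) hle
        rwa [Real.log_exp, hlog] at this
      rw [max_eq_left hle, Real.log_exp, max_eq_left h1]

lemma g_abs (t : ℝ) : g |t| = g t := by simp [g, abs_abs]

lemma v_abs (lam t : ℝ) : v lam |t| = v lam t := by rw [v_eq, v_eq, g_abs]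

lemma v_nonneg (lam t : ℝ) : 0 ≤ v lam t := by
  rw [v_eq]; exact Real.rpow_nonneg (g_nonneg t) lam

lemma one_le_v (lam : ℝ) (hlam : 0 ≤ lam) (t : ℝ) : 1 ≤ v lam t := by
  rw [v_eq]; exact Real.one_le_rpow (one_le_g t) hlam

lemma g_anti {a b : ℝ} (ha : 0 < a) (hab : a ≤ b) : g b ≤ g a := by
  unfold g
  rw [abs_of_pos ha, abs_of_pos (ha.trans_le hab)]
  exact max_le (le_max_left _ _)
    (le_trans (by linarith [Real.log_le_log ha hab]) (le_max_right _ _))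

lemma v_anti (lam : ℝ) (hlam : 0 ≤ lam) {a b : ℝ} (ha : 0 < a) (hab : a ≤ b) :
    v lam b ≤ v lam a := by
  rw [v_eq, v_eq]; exact Real.rpow_le_rpow (g_nonneg b) (g_anti ha hab) hlam

lemma v_one_of_one_le (lam : ℝ) {t : ℝ} (ht : 1 ≤ t) : v lam t = 1 := by
  rw [v_eq]
  have : g t = 1 := by
    unfold g
    rw [abs_of_pos (lt_of_lt_of_le one_pos ht), max_eq_left (by linarith [Real.log_nonneg ht])]
  rw [this, Real.one_rpow]

lemma g_doubling {u : ℝ} (hu : 0 < u) : g u ≤ (1 + Real.log 3) * g (3 * u) := by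
  have l3 : 0 < Real.log 3 := Real.log_pos (by norm_num)
  have h3u : Real.log (3 * u) = Real.log 3 + Real.log u :=
    Real.log_mul (by norm_num) hu.ne'
  set G := g (3 * u) with hG
  have hg3 : 1 ≤ G := one_le_g _
  have hg3' : 1 - Real.log 3 - Real.log u ≤ G := by
    rw [hG]; unfold g
    rw [abs_of_pos (by linarith), h3u]
    exact le_trans (le_of_eq (by ring)) (le_max_right _ _)
  have hgu : g u = max 1 (1 - Real.log u) := by unfold g; rw [abs_of_pos hu]
  rw [hgu]
  rcases le_total (1 - Real.log u) 1 with h | h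
  · rw [max_eq_left h]; nlinarith
  · rw [max_eq_right h]
    rcases le_total (- Real.log u) (Real.log 3) with h2 | h2
    · nlinarith
    · nlinarith

lemma v_doubling (lam : ℝ) (hlam : 0 ≤ lam) {u : ℝ} (hu : 0 < u) :
    v lam u ≤ (1 + Real.log 3) ^ lam * v lam (3 * u) := by
  have l3 : 0 < Real.log 3 := Real.log_pos (by norm_num)
  rw [v_eq, v_eq, ← Real.mul_rpow (by linarith) (g_nonneg _)]
  exact Real.rpow_le_rpow (g_nonneg u) (g_doubling hu) hlam

lemma v_meas (lam : ℝ) : Measurable fun t : ℝ => ENNReal.ofReal (v lam t) := by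
  unfold v
  measurability

end WlamAux
open ENNReal
namespace WlamAux

lemma lintegral_Ioo_scale (f : ℝ → ℝ≥0∞) (hf : Measurable f) {R : ℝ} (hR : 0 < R) :
    ∫⁻ t in Ioo (0:ℝ) R, f t = ENNReal.ofReal R * ∫⁻ u in Ioo (0:ℝ) 1, f (R * u) := by
  have hmem : ∀ u : ℝ, R * u ∈ Ioo (0:ℝ) R ↔ u ∈ Ioo (0:ℝ) 1 := by
    intro u
    simp only [mem_Ioo]
    constructor
    · rintro ⟨h1, h2⟩
      refine ⟨by nlinarith, by nlinarith⟩
    · rintro ⟨h1, h2⟩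
      exact ⟨by positivity, by nlinarith⟩
  have h1 : ∫⁻ u in Ioo (0:ℝ) 1, f (R * u)
      = ENNReal.ofReal R⁻¹ * ∫⁻ t in Ioo (0:ℝ) R, f t := by
    rw [← lintegral_indicator measurableSet_Ioo _, ← lintegral_indicator measurableSet_Ioo _]
    have hind : ∀ u : ℝ, (Ioo (0:ℝ) 1).indicator (fun u => f (R * u)) u
        = (Ioo (0:ℝ) R).indicator f (R * u) := by
      intro u
      by_cases hu : u ∈ Ioo (0:ℝ) 1
      · rw [indicator_of_mem hu, indicator_of_mem ((hmem u).mpr hu)]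
      · rw [indicator_of_notMem hu, indicator_of_notMem (fun h => hu ((hmem u).mp h))]
    simp_rw [hind]
    rw [← lintegral_map (hf.indicator measurableSet_Ioo) (measurable_const_mul R),
      Real.map_volume_mul_left hR.ne', lintegral_smul_measure,
      abs_inv, abs_of_pos hR, smul_eq_mul]
  rw [h1, ← mul_assoc, ← ENNReal.ofReal_mul hR.le, mul_inv_cancel₀ hR.ne',
    ENNReal.ofReal_one, one_mul]

lemma lintegral_Ioo_neg (f : ℝ → ℝ≥0∞) (hf : Measurable f) (hsymm : ∀ t, f (-t) = f t)
    (R : ℝ) : ∫⁻ t in Ioo (-R) 0, f t = ∫⁻ t in Ioo (0:ℝ) R, f t := by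
  rw [← lintegral_indicator measurableSet_Ioo _, ← lintegral_indicator measurableSet_Ioo _]
  have : ∀ t : ℝ, (Ioo (-R) 0).indicator f t = (Ioo (0:ℝ) R).indicator f (-t) := by
    intro t
    by_cases ht : t ∈ Ioo (-R) 0
    · simp only [mem_Ioo] at ht
      have hmem : -t ∈ Ioo (0:ℝ) R := ⟨by linarith [ht.2], by linarith [ht.1]⟩
      rw [indicator_of_mem (by exact ⟨ht.1, ht.2⟩), indicator_of_mem hmem, hsymm]
    · rw [indicator_of_notMem ht, indicator_of_notMem]
      intro h
      simp only [mem_Ioo] at h ht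
      exact ht ⟨by linarith [h.2], by linarith [h.1]⟩
  simp_rw [this]
  calc ∫⁻ t, (Ioo (0:ℝ) R).indicator f (-t)
      = ∫⁻ t, (Ioo (0:ℝ) R).indicator f t ∂(Measure.map Neg.neg volume) := by
        rw [lintegral_map (hf.indicator measurableSet_Ioo) measurable_neg]
    _ = ∫⁻ t, (Ioo (0:ℝ) R).indicator f t := by rw [Measure.map_neg_eq_self]

end WlamAux
namespace WlamAux

lemma v_bound_pow (lam : ℝ) (hlam : 0 < lam) {u : ℝ} (hu : 0 < u) (hu1 : u < 1) :
    v lam u ≤ (1 + 2 * lam) ^ lam * u ^ (-(1:ℝ)/2) := by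
  have heps : 0 < 1 / (2 * lam) := by positivity
  set X := u ^ (-(1 / (2 * lam))) with hXdef
  have hXpos : 0 < X := Real.rpow_pos_of_pos hu _
  have hX : (1:ℝ) ≤ X :=
    Real.one_le_rpow_of_pos_of_le_one_of_nonpos hu hu1.le (neg_nonpos_of_nonneg (by positivity))
  have hloginv : Real.log u⁻¹ ≤ 2 * lam * X := by
    have h := Real.log_le_rpow_div (inv_nonneg.mpr hu.le) heps
    calc Real.log u⁻¹ ≤ u⁻¹ ^ (1 / (2 * lam)) / (1 / (2 * lam)) := h
      _ = 2 * lam * X := by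
          rw [Real.inv_rpow hu.le, ← Real.rpow_neg hu.le, ← hXdef, div_eq_mul_inv, one_div,
            inv_inv]
          ring
  have hgu : g u ≤ (1 + 2 * lam) * X := by
    have hlog : 1 - Real.log u = 1 + Real.log u⁻¹ := by rw [Real.log_inv]; ring
    unfold g
    rw [abs_of_pos hu]
    apply max_le
    · nlinarith
    · rw [hlog]; nlinarith
  have h1 : v lam u ≤ ((1 + 2 * lam) * X) ^ lam := by
    rw [v_eq]
    exact Real.rpow_le_rpow (g_nonneg u) hgu hlam.le
  have h2 : ((1 + 2 * lam) * X) ^ lam = (1 + 2 * lam) ^ lam * u ^ (-(1:ℝ)/2) := by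
    have hne : lam ≠ 0 := hlam.ne'
    have hexp : (-(1 / (2 * lam))) * lam = -(1:ℝ)/2 := by field_simp
    rw [Real.mul_rpow (by nlinarith) hXpos.le, hXdef, ← Real.rpow_mul hu.le, hexp]
  rw [h2] at h1
  exact h1

lemma J_lt_top (lam : ℝ) (hlam : 0 < lam) :
    (∫⁻ u in Ioo (0:ℝ) 1, ENNReal.ofReal (v lam u)) < ⊤ := by
  have hint : IntegrableOn (fun u : ℝ => u ^ (-(1:ℝ)/2)) (Ioo 0 1) :=
    (intervalIntegral.integrableOn_Ioo_rpow_iff one_pos).mpr (by norm_num)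
  have hfin : (∫⁻ u in Ioo (0:ℝ) 1, (‖(u:ℝ) ^ (-(1:ℝ)/2)‖₊ : ℝ≥0∞)) < ⊤ := hint.2
  have hle : ∫⁻ u in Ioo (0:ℝ) 1, ENNReal.ofReal (v lam u)
      ≤ ∫⁻ u in Ioo (0:ℝ) 1,
          ENNReal.ofReal ((1 + 2 * lam) ^ lam) * (‖(u:ℝ) ^ (-(1:ℝ)/2)‖₊ : ℝ≥0∞) := by
    apply setLIntegral_mono (by measurability)
    intro u hu
    calc ENNReal.ofReal (v lam u)
        ≤ ENNReal.ofReal ((1 + 2 * lam) ^ lam * u ^ (-(1:ℝ)/2)) :=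
          ENNReal.ofReal_le_ofReal (v_bound_pow lam hlam hu.1 hu.2)
      _ = ENNReal.ofReal ((1 + 2 * lam) ^ lam) * ENNReal.ofReal (u ^ (-(1:ℝ)/2)) :=
          ENNReal.ofReal_mul (by positivity)
      _ ≤ ENNReal.ofReal ((1 + 2 * lam) ^ lam) * (‖(u:ℝ) ^ (-(1:ℝ)/2)‖₊ : ℝ≥0∞) := by
          exact mul_le_mul_right (Real.ofReal_le_enorm _) _
  refine lt_of_le_of_lt hle ?_
  rw [lintegral_const_mul' _ _ ENNReal.ofReal_ne_top]
  exact ENNReal.mul_lt_top ENNReal.ofReal_lt_top hfin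

/-- The (finite, nonnegative) value of `∫_0^1 v`. -/
noncomputable def Jr (lam : ℝ) : ℝ :=
  (∫⁻ u in Ioo (0:ℝ) 1, ENNReal.ofReal (v lam u)).toReal

lemma Jr_nonneg (lam : ℝ) : 0 ≤ Jr lam := ENNReal.toReal_nonneg

lemma J_eq (lam : ℝ) (hlam : 0 < lam) :
    (∫⁻ u in Ioo (0:ℝ) 1, ENNReal.ofReal (v lam u)) = ENNReal.ofReal (Jr lam) := by
  rw [Jr, ENNReal.ofReal_toReal (J_lt_top lam hlam).ne]

end WlamAux
namespace WlamAux

noncomputable def C0 (lam : ℝ) : ℝ := 2 * 2 ^ lam * (1 + Jr lam)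

lemma one_le_two_rpow (lam : ℝ) (hlam : 0 ≤ lam) : (1:ℝ) ≤ 2 ^ lam :=
  Real.one_le_rpow (by norm_num) hlam

lemma C0_pos (lam : ℝ) (hlam : 0 < lam) : 0 < C0 lam := by
  have h1 := one_le_two_rpow lam hlam.le
  have h2 := Jr_nonneg lam
  unfold C0; nlinarith

lemma v_mul_le (lam : ℝ) (hlam : 0 < lam) {R u : ℝ} (hR : 0 < R) (hu : 0 < u) :
    v lam (R * u) ≤ 2 ^ lam * (v lam R + v lam u) := by
  have h1 : g (R * u) ≤ g R + g u := by
    have hgR := one_le_g R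
    have hgu := one_le_g u
    have hlogmul : Real.log (R * u) = Real.log R + Real.log u := Real.log_mul hR.ne' hu.ne'
    have h1R : 1 - Real.log R ≤ g R := by unfold g; rw [abs_of_pos hR]; exact le_max_right _ _
    have h1u : 1 - Real.log u ≤ g u := by unfold g; rw [abs_of_pos hu]; exact le_max_right _ _
    have : g (R * u) = max 1 (1 - (Real.log R + Real.log u)) := by
      unfold g; rw [abs_of_pos (mul_pos hR hu), hlogmul]
    rw [this]
    apply max_le
    · linarith
    · linarith
  have h2 : g R + g u ≤ 2 * max (g R) (g u) := by
    rcases max_cases (g R) (g u) with ⟨he, hle⟩ | ⟨he, hle⟩ <;> rw [he] <;> linarith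
  have h3 : v lam (R * u) ≤ (2 * max (g R) (g u)) ^ lam := by
    rw [v_eq]
    exact Real.rpow_le_rpow (g_nonneg _) (h1.trans h2) hlam.le
  have h4 : (2 * max (g R) (g u)) ^ lam = 2 ^ lam * (max (g R) (g u)) ^ lam :=
    Real.mul_rpow (by norm_num) (le_max_of_le_left (g_nonneg R))
  have h5 : (max (g R) (g u)) ^ lam ≤ v lam R + v lam u := by
    rw [v_eq, v_eq]
    rcases le_total (g R) (g u) with h | h
    · rw [max_eq_right h]
      nlinarith [Real.rpow_nonneg (g_nonneg R) lam]
    · rw [max_eq_left h]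
      nlinarith [Real.rpow_nonneg (g_nonneg u) lam]
  calc v lam (R * u) ≤ 2 ^ lam * (max (g R) (g u)) ^ lam := by rw [← h4]; exact h3
    _ ≤ 2 ^ lam * (v lam R + v lam u) := by
        have := one_le_two_rpow lam hlam.le
        nlinarith [h5]

lemma v_meas' (lam : ℝ) : Measurable (v lam) := by
  unfold v
  measurability

lemma lintegral_Ioo01_le (lam : ℝ) (hlam : 0 < lam) {R : ℝ} (hR : 0 < R) :
    ∫⁻ u in Ioo (0:ℝ) 1, ENNReal.ofReal (v lam (R * u))
      ≤ ENNReal.ofReal (2 ^ lam * (1 + Jr lam) * v lam R) := by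
  have hvR1 : (1:ℝ) ≤ v lam R := one_le_v lam hlam.le R
  have h2l : (1:ℝ) ≤ 2 ^ lam := one_le_two_rpow lam hlam.le
  have h2pos : (0:ℝ) < 2 ^ lam := by linarith
  set c : ℝ≥0∞ := ENNReal.ofReal (2 ^ lam) with hc
  rcases le_total R 1 with hR1 | hR1
  · -- R ≤ 1 : use v (R u) ≤ 2^λ (v R + v u)
    have hmono : ∫⁻ u in Ioo (0:ℝ) 1, ENNReal.ofReal (v lam (R * u))
        ≤ ∫⁻ u in Ioo (0:ℝ) 1,
            (c * ENNReal.ofReal (v lam R) + c * ENNReal.ofReal (v lam u)) := by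
      apply setLIntegral_mono (measurable_const.add ((v_meas lam).const_mul _))
      intro u hu
      calc ENNReal.ofReal (v lam (R * u))
          ≤ ENNReal.ofReal (2 ^ lam * (v lam R + v lam u)) :=
            ENNReal.ofReal_le_ofReal (v_mul_le lam hlam hR hu.1)
        _ = c * ENNReal.ofReal (v lam R) + c * ENNReal.ofReal (v lam u) := by
            rw [ENNReal.ofReal_mul h2pos.le, ENNReal.ofReal_add (v_nonneg lam R) (v_nonneg lam u),
              mul_add]
    refine hmono.trans ?_
    rw [lintegral_add_left measurable_const, setLIntegral_const,
      lintegral_const_mul' _ _ ENNReal.ofReal_ne_top, J_eq lam hlam, Real.volume_Ioo]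
    have heq : c * ENNReal.ofReal (v lam R) * ENNReal.ofReal (1 - 0)
        + c * ENNReal.ofReal (Jr lam)
        = ENNReal.ofReal (2 ^ lam * v lam R + 2 ^ lam * Jr lam) := by
      rw [hc, ← ENNReal.ofReal_mul h2pos.le, ← ENNReal.ofReal_mul h2pos.le,
        ENNReal.ofReal_add (by nlinarith) (by nlinarith [Jr_nonneg lam])]
      norm_num
    rw [heq]
    apply ENNReal.ofReal_le_ofReal
    have key : (0:ℝ) ≤ 2 ^ lam * (Jr lam * (v lam R - 1)) :=
      mul_nonneg h2pos.le (mul_nonneg (Jr_nonneg lam) (by linarith))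
    nlinarith
  · -- 1 ≤ R : v (R u) ≤ v u
    have hmono : ∫⁻ u in Ioo (0:ℝ) 1, ENNReal.ofReal (v lam (R * u))
        ≤ ∫⁻ u in Ioo (0:ℝ) 1, ENNReal.ofReal (v lam u) := by
      apply setLIntegral_mono (v_meas lam)
      intro u hu
      apply ENNReal.ofReal_le_ofReal
      apply v_anti lam hlam.le hu.1
      nlinarith [hu.1]
    refine hmono.trans ?_
    rw [J_eq lam hlam]
    apply ENNReal.ofReal_le_ofReal
    nlinarith [Jr_nonneg lam,
      mul_nonneg (sub_nonneg.mpr h2l) (Jr_nonneg lam),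
      mul_nonneg (mul_nonneg h2pos.le (by nlinarith [Jr_nonneg lam] : (0:ℝ) ≤ 1 + Jr lam))
        (sub_nonneg.mpr hvR1)]

lemma lintegral_symm_interval (lam : ℝ) (hlam : 0 < lam) {R : ℝ} (hR : 0 < R) :
    ∫⁻ t in Ioo (-R) R, ENNReal.ofReal (v lam t)
      ≤ ENNReal.ofReal (C0 lam * R * v lam R) := by
  have hmeas := v_meas lam
  have hsub : Ioo (-R) R ⊆ Ioo (-R) 0 ∪ (Ioo (0:ℝ) R ∪ {0}) := by
    intro t ht
    rcases lt_trichotomy t 0 with h | h | h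
    · exact Or.inl ⟨ht.1, h⟩
    · exact Or.inr (Or.inr (by simp [h]))
    · exact Or.inr (Or.inl ⟨h, ht.2⟩)
  have hsplit : ∫⁻ t in Ioo (-R) R, ENNReal.ofReal (v lam t)
      ≤ (∫⁻ t in Ioo (-R) 0, ENNReal.ofReal (v lam t))
        + ((∫⁻ t in Ioo (0:ℝ) R, ENNReal.ofReal (v lam t))
           + ∫⁻ t in ({0} : Set ℝ), ENNReal.ofReal (v lam t)) := by
    refine le_trans (lintegral_mono_set hsub) ?_
    refine le_trans (lintegral_union_le _ _ _) ?_
    exact add_le_add_right (lintegral_union_le _ _ _) _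
  have hzero : (∫⁻ t in ({0} : Set ℝ), ENNReal.ofReal (v lam t)) = 0 := by
    apply setLIntegral_measure_zero
    exact measure_singleton 0
  have hneg : ∫⁻ t in Ioo (-R) 0, ENNReal.ofReal (v lam t)
      = ∫⁻ t in Ioo (0:ℝ) R, ENNReal.ofReal (v lam t) := by
    apply lintegral_Ioo_neg _ hmeas
    intro t
    rw [← v_abs lam (-t), abs_neg, v_abs]
  have hscale : ∫⁻ t in Ioo (0:ℝ) R, ENNReal.ofReal (v lam t)
      = ENNReal.ofReal R * ∫⁻ u in Ioo (0:ℝ) 1, ENNReal.ofReal (v lam (R * u)) :=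
    lintegral_Ioo_scale _ hmeas hR
  calc ∫⁻ t in Ioo (-R) R, ENNReal.ofReal (v lam t)
      ≤ (∫⁻ t in Ioo (0:ℝ) R, ENNReal.ofReal (v lam t))
        + ((∫⁻ t in Ioo (0:ℝ) R, ENNReal.ofReal (v lam t)) + 0) := by
        rw [hneg, hzero] at hsplit; exact hsplit
    _ = 2 * (ENNReal.ofReal R * ∫⁻ u in Ioo (0:ℝ) 1, ENNReal.ofReal (v lam (R * u))) := by
        rw [add_zero, hscale, two_mul]
    _ ≤ 2 * (ENNReal.ofReal R * ENNReal.ofReal (2 ^ lam * (1 + Jr lam) * v lam R)) := by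
        gcongr
        exact lintegral_Ioo01_le lam hlam hR
    _ = ENNReal.ofReal (C0 lam * R * v lam R) := by
        rw [← ENNReal.ofReal_mul hR.le, ← ENNReal.ofReal_ofNat, ← ENNReal.ofReal_mul (by norm_num)]
        congr 1
        unfold C0
        ring

end WlamAux
namespace WlamAux

noncomputable def C1 (lam : ℝ) : ℝ := max (3 * C0 lam) (2 * (1 + Real.log 3) ^ lam)

lemma C1_pos (lam : ℝ) (hlam : 0 < lam) : 0 < C1 lam :=
  lt_of_lt_of_le (by nlinarith [C0_pos lam hlam]) (le_max_left _ _)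

lemma oneD (lam : ℝ) (hlam : 0 < lam) (z₂ r : ℝ) (hr : 0 < r) {s : ℝ}
    (hs : |s - z₂| < r) (hs0 : s ≠ 0) :
    ∫⁻ t in Ioo (z₂ - r) (z₂ + r), ENNReal.ofReal (v lam t)
      ≤ ENNReal.ofReal (C1 lam * r * v lam s) := by
  set b := |z₂| with hb
  have hbnn : 0 ≤ b := abs_nonneg _
  have hsabs : |s| ≤ b + r := by
    have h1 : |s| - |z₂| ≤ |s - z₂| := abs_sub_abs_le_abs_sub s z₂
    linarith
  have hspos : 0 < |s| := abs_pos.mpr hs0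
  have hvs_nonneg : 0 ≤ v lam s := v_nonneg lam s
  rcases le_total b (2 * r) with hcase | hcase
  · -- near the origin
    have hsub : Ioo (z₂ - r) (z₂ + r) ⊆ Ioo (-(3 * r)) (3 * r) := by
      intro t ht
      have h1 : -b ≤ z₂ := neg_abs_le z₂
      have h2 : z₂ ≤ b := le_abs_self z₂
      exact ⟨by linarith [ht.1], by linarith [ht.2]⟩
    have h3r : (0:ℝ) < 3 * r := by linarith
    have hstep : ∫⁻ t in Ioo (z₂ - r) (z₂ + r), ENNReal.ofReal (v lam t)
        ≤ ENNReal.ofReal (C0 lam * (3 * r) * v lam (3 * r)) :=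
      le_trans (lintegral_mono_set hsub) (lintegral_symm_interval lam hlam h3r)
    refine hstep.trans (ENNReal.ofReal_le_ofReal ?_)
    have hvs : v lam (3 * r) ≤ v lam s := by
      rw [← v_abs lam s]
      exact v_anti lam hlam.le hspos (by linarith)
    have hC : 3 * C0 lam ≤ C1 lam := le_max_left _ _
    have hC0 := C0_pos lam hlam
    have hv3 := v_nonneg lam (3 * r)
    have hC1nn : 0 ≤ C1 lam := by linarith
    calc C0 lam * (3 * r) * v lam (3 * r) = (3 * C0 lam) * (r * v lam (3 * r)) := by ring
      _ ≤ C1 lam * (r * v lam (3 * r)) :=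
          mul_le_mul_of_nonneg_right hC (mul_nonneg hr.le hv3)
      _ ≤ C1 lam * (r * v lam s) :=
          mul_le_mul_of_nonneg_left (mul_le_mul_of_nonneg_left hvs hr.le) hC1nn
      _ = C1 lam * r * v lam s := by ring
  · -- away from the origin
    have hbr : 0 < b - r := by linarith
    have hpt : ∀ t ∈ Ioo (z₂ - r) (z₂ + r), ENNReal.ofReal (v lam t)
        ≤ ENNReal.ofReal (v lam (b - r)) := by
      intro t ht
      apply ENNReal.ofReal_le_ofReal
      have habs : b - r ≤ |t| := by
        have h1 : |z₂| - |t| ≤ |z₂ - t| := abs_sub_abs_le_abs_sub z₂ t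
        have h2 : |z₂ - t| = |t - z₂| := abs_sub_comm z₂ t
        have h3 : |t - z₂| < r := abs_lt.mpr ⟨by linarith [ht.1], by linarith [ht.2]⟩
        linarith
      rw [← v_abs lam t]
      exact v_anti lam hlam.le hbr habs
    have hstep : ∫⁻ t in Ioo (z₂ - r) (z₂ + r), ENNReal.ofReal (v lam t)
        ≤ ENNReal.ofReal (v lam (b - r) * (2 * r)) := by
      refine le_trans (setLIntegral_mono measurable_const hpt) ?_
      rw [setLIntegral_const, Real.volume_Ioo, ← ENNReal.ofReal_mul (v_nonneg lam _)]
      apply ENNReal.ofReal_le_ofReal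
      have : z₂ + r - (z₂ - r) = 2 * r := by ring
      rw [this]
    refine hstep.trans (ENNReal.ofReal_le_ofReal ?_)
    have hdoub : v lam (b - r) ≤ (1 + Real.log 3) ^ lam * v lam (3 * (b - r)) :=
      v_doubling lam hlam.le hbr
    have hvs : v lam (3 * (b - r)) ≤ v lam s := by
      rw [← v_abs lam s]
      exact v_anti lam hlam.le hspos (by linarith)
    have hC : 2 * (1 + Real.log 3) ^ lam ≤ C1 lam := le_max_right _ _
    have hl3 : (0:ℝ) < (1 + Real.log 3) ^ lam :=
      Real.rpow_pos_of_pos (by linarith [Real.log_pos (by norm_num : (1:ℝ) < 3)]) lam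
    have hv3 := v_nonneg lam (3 * (b - r))
    have hvbr := v_nonneg lam (b - r)
    have hC1nn : 0 ≤ C1 lam := by nlinarith
    calc v lam (b - r) * (2 * r)
        ≤ ((1 + Real.log 3) ^ lam * v lam (3 * (b - r))) * (2 * r) :=
          mul_le_mul_of_nonneg_right hdoub (by linarith)
      _ ≤ ((1 + Real.log 3) ^ lam * v lam s) * (2 * r) := by
          apply mul_le_mul_of_nonneg_right _ (by linarith : (0:ℝ) ≤ 2 * r)
          exact mul_le_mul_of_nonneg_left hvs hl3.le
      _ = (2 * (1 + Real.log 3) ^ lam) * (r * v lam s) := by ring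
      _ ≤ C1 lam * (r * v lam s) :=
          mul_le_mul_of_nonneg_right hC (mul_nonneg hr.le hvs_nonneg)
      _ = C1 lam * r * v lam s := by ring

end WlamAux
/-- The weight `w_λ(x₁,x₂) = (log(max{e, e/|x₂|}))^λ` on `ℝ²`. -/
noncomputable def wlam (lam : ℝ) (x : ℝ × ℝ) : ℝ :=
  Real.log (max (Real.exp 1) (Real.exp 1 / |x.2|)) ^ lam

/-- The weighted measure `dμ = w_λ dm₂` on `ℝ²`. -/
noncomputable def muW (lam : ℝ) : Measure (ℝ × ℝ) :=
  (volume : Measure (ℝ × ℝ)).withDensity fun x => ENNReal.ofReal (wlam lam x)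

/-- For `λ > 0` there is a constant `C`, depending only on `λ`, such
that `μ(B(z,r)) ≤ C r² w_λ(x)` for every ball `B(z,r) ⊆ ℝ²` and every point
`x ∈ B(z,r)` with `x₂ ≠ 0`; that is, `μ(B(z,r)) ≤ C r² inf_{B(z,r)} w_λ`, so `w_λ` is
a Muckenhoupt `A₁`-weight on `ℝ²`. -/
theorem wlam_A1 (lam : ℝ) (hlam : 0 < lam) :
    ∃ C > (0 : ℝ), ∀ (z : ℝ × ℝ) (r : ℝ), 0 < r →
      ∀ x ∈ ball z r, x.2 ≠ 0 →
        muW lam (ball z r) ≤ ENNReal.ofReal (C * r ^ 2 * wlam lam x) := by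
  refine ⟨2 * WlamAux.C1 lam, by nlinarith [WlamAux.C1_pos lam hlam], ?_⟩
  intro z r hr x hx hx0
  have hball : (ball z r : Set (ℝ × ℝ)) = ball z.1 r ×ˢ ball z.2 r :=
    (ball_prod_same z.1 z.2 r).symm
  have hx2 : x.2 ∈ ball z.2 r := by rw [hball] at hx; exact hx.2
  have hx2' : |x.2 - z.2| < r := by rwa [mem_ball, Real.dist_eq] at hx2
  have h1D := WlamAux.oneD lam hlam z.2 r hr hx2' hx0
  calc muW lam (ball z r)
      = ∫⁻ p in ball z r, ENNReal.ofReal (WlamAux.v lam p.2) :=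
        withDensity_apply _ measurableSet_ball
    _ = ∫⁻ p, ENNReal.ofReal (WlamAux.v lam p.2)
          ∂((volume.restrict (ball z.1 r)).prod (volume.restrict (ball z.2 r))) := by
        rw [hball, Measure.volume_eq_prod, ← Measure.prod_restrict]
    _ = (∫⁻ _ in ball z.1 r, (1:ℝ≥0∞))
          * ∫⁻ t in ball z.2 r, ENNReal.ofReal (WlamAux.v lam t) := by
        rw [← lintegral_prod_mul aemeasurable_const ((WlamAux.v_meas lam).aemeasurable)]
        simp
    _ = ENNReal.ofReal (2 * r) * ∫⁻ t in ball z.2 r, ENNReal.ofReal (WlamAux.v lam t) := by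
        rw [setLIntegral_one, Real.volume_ball]
    _ ≤ ENNReal.ofReal (2 * r)
          * ENNReal.ofReal (WlamAux.C1 lam * r * WlamAux.v lam x.2) := by
        gcongr
        rw [Real.ball_eq_Ioo]
        exact h1D
    _ = ENNReal.ofReal (2 * WlamAux.C1 lam * r ^ 2 * wlam lam x) := by
        rw [← ENNReal.ofReal_mul (by linarith : (0:ℝ) ≤ 2 * r)]
        congr 1
        show 2 * r * (WlamAux.C1 lam * r * WlamAux.v lam x.2)
          = 2 * WlamAux.C1 lam * r ^ 2 * WlamAux.v lam x.2
        ring
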